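/- Let m ≥ 1, γ ≠ 0, and let n : ℝ → ℂ^{m×m} be measurable with, for a.e. ξ ∈ ℝ and a constant C₀ > 0: |n(ξ)| ≤ C₀ min{|ξ|², |ξ|^{−1}} and Re[n(ξ)a·conj(a)] ≥ C₀^{−1} min{|ξ|², |ξ|^{−1}}|a|² for all a ∈ ℂ^m. Let o₀ = diag(d₁,...,d_m) with all d_ℓ > 0, and set p(ξ) = n(ξ)* o₀ − 2πi γ ξ I ∈ ℂ^{m×m}. Then there exists C > 0, depending only on C₀, γ, and the d_ℓ, such that for a.e. ξ ∈ ℝ and all b ∈ ℂ^m: C^{−1} |p(ξ) b|² ≤ |ξ|² |b|² ≤ C |p(ξ) b|². -/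

import Mathlib

open scoped ComplexConjugate

/-- The Euclidean norm on `ℂ^m`. -/
noncomputable def cvecNorm {m : ℕ} (b : Fin m → ℂ) : ℝ :=
  Real.sqrt (∑ i, ‖b i‖ ^ 2)

/-- The one-dimensional, zero surface tension symbol `p(ξ) = N(ξ)* o₀ − 2πiγξ I`. -/
noncomputable def surfSymb1D {m : ℕ} (γ : ℝ) (dvec : Fin m → ℝ)
    (N : ℝ → Matrix (Fin m) (Fin m) ℂ) (ξ : ℝ) : Matrix (Fin m) (Fin m) ℂ :=
  (N ξ).conjTranspose * Matrix.diagonal (fun ℓ => ((dvec ℓ : ℝ) : ℂ))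
    - (((2 * Real.pi * γ * ξ : ℝ) : ℂ) * Complex.I) • 1

section Aux

open Matrix
open scoped Matrix.Norms.L2Operator

/-- Vector in `ℂ^m` viewed in Euclidean space. -/
noncomputable def toE {m : ℕ} (b : Fin m → ℂ) : EuclideanSpace ℂ (Fin m) :=
  (WithLp.equiv 2 (Fin m → ℂ)).symm b

lemma cvecNorm_eq {m : ℕ} (b : Fin m → ℂ) : cvecNorm b = ‖toE b‖ := by
  rw [cvecNorm, EuclideanSpace.norm_eq]
  rfl

lemma cvecNorm_nonneg {m : ℕ} (b : Fin m → ℂ) : 0 ≤ cvecNorm b :=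
  Real.sqrt_nonneg _

lemma cvecNorm_smul {m : ℕ} (z : ℂ) (b : Fin m → ℂ) :
    cvecNorm (z • b) = ‖z‖ * cvecNorm b := by
  simp only [cvecNorm_eq]
  have : toE (z • b) = z • toE b := rfl
  rw [this, norm_smul]

lemma cvecNorm_sub_le {m : ℕ} (x y : Fin m → ℂ) :
    cvecNorm (x - y) ≤ cvecNorm x + cvecNorm y := by
  simp only [cvecNorm_eq]
  have : toE (x - y) = toE x - toE y := rfl
  rw [this]
  exact norm_sub_le _ _

lemma cvecNorm_sub_ge {m : ℕ} (x y : Fin m → ℂ) :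
    cvecNorm y - cvecNorm x ≤ cvecNorm (x - y) := by
  simp only [cvecNorm_eq]
  have : toE (x - y) = toE x - toE y := rfl
  rw [this, norm_sub_rev]
  exact norm_sub_norm_le _ _

lemma cvecNorm_le_of_forall {m : ℕ} {v w : Fin m → ℂ} {c : ℝ} (hc : 0 ≤ c)
    (h : ∀ i, ‖v i‖ ≤ c * ‖w i‖) : cvecNorm v ≤ c * cvecNorm w := by
  rw [cvecNorm, cvecNorm, ← Real.sqrt_sq hc, ← Real.sqrt_mul (by positivity)]
  apply Real.sqrt_le_sqrt
  rw [Finset.mul_sum]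
  apply Finset.sum_le_sum
  intro i _
  calc ‖v i‖ ^ 2 ≤ (c * ‖w i‖) ^ 2 := by
        apply pow_le_pow_left₀ (norm_nonneg _) (h i)
    _ = c ^ 2 * ‖w i‖ ^ 2 := by ring

lemma opNorm_le_of_cvec {m : ℕ} (A : Matrix (Fin m) (Fin m) ℂ) {K : ℝ} (hK : 0 ≤ K)
    (h : ∀ b, cvecNorm (A *ᵥ b) ≤ K * cvecNorm b) : ‖A‖ ≤ K := by
  rw [Matrix.l2_opNorm_def]
  refine ContinuousLinearMap.opNorm_le_bound _ hK fun x => ?_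
  have := h ((WithLp.equiv 2 (Fin m → ℂ)) x)
  simpa [cvecNorm_eq, toE, Matrix.toEuclideanLin_apply] using this

lemma cvecNorm_mulVec_le {m : ℕ} (A : Matrix (Fin m) (Fin m) ℂ) (b : Fin m → ℂ) :
    cvecNorm (A *ᵥ b) ≤ ‖A‖ * cvecNorm b := by
  rw [cvecNorm_eq, cvecNorm_eq]
  simpa [toE] using Matrix.l2_opNorm_mulVec A (toE b)

lemma re_sum_le {m : ℕ} (u w : Fin m → ℂ) :
    (∑ i, u i * conj (w i)).re ≤ cvecNorm u * cvecNorm w := by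
  have h1 : (∑ i, u i * conj (w i)) = inner ℂ (toE w) (toE u) := by
    rw [PiLp.inner_apply]
    refine Finset.sum_congr rfl fun i _ => ?_
    simp [toE, RCLike.inner_apply, mul_comm]
  calc (∑ i, u i * conj (w i)).re ≤ ‖(∑ i, u i * conj (w i))‖ := by
        exact Complex.re_le_norm _
    _ = ‖(inner ℂ (toE w) (toE u) : ℂ)‖ := by rw [h1]
    _ ≤ ‖toE w‖ * ‖toE u‖ := norm_inner_le_norm _ _
    _ = cvecNorm u * cvecNorm w := by rw [cvecNorm_eq, cvecNorm_eq]; ring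

lemma re_conjTranspose_sum {m : ℕ} (A : Matrix (Fin m) (Fin m) ℂ) (v : Fin m → ℂ) :
    (∑ i, (Aᴴ *ᵥ v) i * conj (v i)).re = (∑ i, (A *ᵥ v) i * conj (v i)).re := by
  have key : (∑ i, (Aᴴ *ᵥ v) i * conj (v i)) = conj (∑ i, (A *ᵥ v) i * conj (v i)) := by
    simp only [Matrix.mulVec, dotProduct, Matrix.conjTranspose_apply, map_sum,
      _root_.map_mul, Complex.conj_conj, Finset.sum_mul]
    rw [Finset.sum_comm]
    refine Finset.sum_congr rfl fun i _ => Finset.sum_congr rfl fun j _ => ?_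
    simp only [← starRingEnd_apply]
    ring
  rw [key, Complex.conj_re]

end Aux

section Main
open Matrix
open scoped Matrix.Norms.L2Operator

set_option maxHeartbeats 2000000 in
/-- One-dimensional (`n = 2`), zero-surface-tension version of the
invertibility estimate for the free-surface symbol: if `n : ℝ → ℂ^{m×m}` satisfies the
two-sided normal-stress-to-normal-Dirichlet bounds with constant `C₀`, `γ ≠ 0`, and
`o₀ = diag(d₁,…,d_m)` with `d_ℓ > 0`, then `p(ξ) = n(ξ)* o₀ − 2πiγξ I` satisfies
`C⁻¹|p(ξ)b|² ≤ |ξ|²|b|² ≤ C|p(ξ)b|²` for a constant `C` depending only on `C₀`, `γ`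
and the `d_ℓ`. -/
theorem stmt_13 (m : ℕ) (hm : 1 ≤ m) (γ C₀ : ℝ) (hγ : γ ≠ 0) (hC₀ : 0 < C₀)
    (dvec : Fin m → ℝ) (hd : ∀ ℓ, 0 < dvec ℓ) :
    ∃ C : ℝ, 0 < C ∧
      ∀ (N : ℝ → Matrix (Fin m) (Fin m) ℂ) (ξ : ℝ),
        (∀ b : Fin m → ℂ,
          cvecNorm ((N ξ).mulVec b) ≤ C₀ * min (|ξ| ^ 2) |ξ|⁻¹ * cvecNorm b) →
        (∀ a : Fin m → ℂ,
          C₀⁻¹ * min (|ξ| ^ 2) |ξ|⁻¹ * cvecNorm a ^ 2 ≤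
            (∑ i, (N ξ).mulVec a i * conj (a i)).re) →
        ∀ b : Fin m → ℂ,
          C⁻¹ * cvecNorm ((surfSymb1D γ dvec N ξ).mulVec b) ^ 2 ≤ |ξ| ^ 2 * cvecNorm b ^ 2 ∧
            |ξ| ^ 2 * cvecNorm b ^ 2 ≤ C * cvecNorm ((surfSymb1D γ dvec N ξ).mulVec b) ^ 2 := by
  have hγ' : 0 < |γ| := abs_pos.mpr hγ
  have hπγ : 0 < Real.pi * |γ| := mul_pos Real.pi_pos hγ'
  have hFm : (Finset.univ : Finset (Fin m)).Nonempty := ⟨⟨0, hm⟩, Finset.mem_univ _⟩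
  set dmax := Finset.univ.sup' hFm dvec with hdmaxdef
  set dmin := Finset.univ.inf' hFm dvec with hdmindef
  have hle : ∀ i, dvec i ≤ dmax := fun i => Finset.le_sup' _ (Finset.mem_univ i)
  have hge : ∀ i, dmin ≤ dvec i := fun i => Finset.inf'_le _ (Finset.mem_univ i)
  have hdmax : 0 < dmax := lt_of_lt_of_le (hd ⟨0, hm⟩) (hle ⟨0, hm⟩)
  have hdmin : 0 < dmin := by
    obtain ⟨i, _, hi⟩ := Finset.exists_mem_eq_inf' hFm dvec
    rw [hdmindef, hi]; exact hd i
  set c₁ : ℝ := C₀ * dmax + 2 * Real.pi * |γ| with hc₁def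
  set c₂ : ℝ := min (Real.pi * |γ|) (Real.pi * |γ| * dmin ^ 2 / (C₀ ^ 2 * dmax ^ 2)) with hc₂def
  have hc₁ : 0 < c₁ := by positivity
  have hc₂ : 0 < c₂ := lt_min hπγ (by positivity)
  refine ⟨max (c₁ ^ 2) (c₂ ^ 2)⁻¹, lt_max_of_lt_left (by positivity), ?_⟩
  intro N ξ h1 h2 b
  set A := N ξ with hA
  set M := min (|ξ| ^ 2) |ξ|⁻¹ with hMdef
  have hM0 : 0 ≤ M := le_min (by positivity) (by positivity)
  have hMξ : M ≤ |ξ| := by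
    rcases le_total (|ξ|) 1 with h | h
    · refine (min_le_left _ _).trans ?_
      nlinarith [abs_nonneg ξ]
    · refine (min_le_right _ _).trans ?_
      calc |ξ|⁻¹ ≤ 1 := by
            rw [inv_le_one_iff₀]; right; exact h
        _ ≤ |ξ| := h
  have hAnorm : ‖A‖ ≤ C₀ * M := opNorm_le_of_cvec A (by positivity) h1
  have hAH : ‖Aᴴ‖ ≤ C₀ * M := by
    rw [Matrix.l2_opNorm_conjTranspose]; exact hAnorm
  set v : Fin m → ℂ := fun i => ((dvec i : ℝ) : ℂ) * b i with hvdef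
  have hvd : (Matrix.diagonal (fun ℓ => ((dvec ℓ : ℝ) : ℂ))) *ᵥ b = v := by
    ext i
    rw [Matrix.mulVec_diagonal]
  have hvi : ∀ i, ‖v i‖ = dvec i * ‖b i‖ := by
    intro i
    rw [hvdef]
    simp only [norm_mul, Complex.norm_real, Real.norm_eq_abs, abs_of_pos (hd i)]
  have hvmax : cvecNorm v ≤ dmax * cvecNorm b := by
    refine cvecNorm_le_of_forall hdmax.le fun i => ?_
    rw [hvi i]
    exact mul_le_mul_of_nonneg_right (hle i) (norm_nonneg _)
  have hvmin : dmin * cvecNorm b ≤ cvecNorm v := by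
    have h' : cvecNorm (((dmin : ℝ) : ℂ) • b) ≤ 1 * cvecNorm v := by
      refine cvecNorm_le_of_forall (by norm_num) fun i => ?_
      rw [one_mul, hvi i]
      simp only [Pi.smul_apply, smul_eq_mul, norm_mul, Complex.norm_real, Real.norm_eq_abs,
        abs_of_pos hdmin]
      exact mul_le_mul_of_nonneg_right (hge i) (norm_nonneg _)
    rw [cvecNorm_smul, Complex.norm_real, Real.norm_eq_abs, abs_of_pos hdmin, one_mul] at h'
    exact h'
  set z : ℂ := ((2 * Real.pi * γ * ξ : ℝ) : ℂ) * Complex.I with hzdef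
  have hPb : (surfSymb1D γ dvec N ξ) *ᵥ b = Aᴴ *ᵥ v - z • b := by
    rw [surfSymb1D, Matrix.sub_mulVec, Matrix.smul_mulVec, Matrix.one_mulVec,
      ← Matrix.mulVec_mulVec, hvd]
  have hznorm : ‖z‖ = 2 * Real.pi * |γ| * |ξ| := by
    rw [hzdef, norm_mul, Complex.norm_I, mul_one, Complex.norm_real, Real.norm_eq_abs,
      abs_mul, abs_mul, abs_mul]
    rw [abs_of_pos (by norm_num : (0:ℝ) < 2), abs_of_pos Real.pi_pos]
  set P : ℝ := cvecNorm ((surfSymb1D γ dvec N ξ) *ᵥ b) with hPdef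
  set B : ℝ := cvecNorm b with hBdef
  have hP0 : 0 ≤ P := cvecNorm_nonneg _
  have hB0 : 0 ≤ B := cvecNorm_nonneg _
  have hAHv : cvecNorm (Aᴴ *ᵥ v) ≤ C₀ * M * (dmax * B) := by
    calc cvecNorm (Aᴴ *ᵥ v) ≤ ‖Aᴴ‖ * cvecNorm v := cvecNorm_mulVec_le _ _
      _ ≤ (C₀ * M) * (dmax * B) := by
          apply mul_le_mul hAH hvmax (cvecNorm_nonneg _) (by positivity)
  -- Upper bound on P
  have hup : P ≤ c₁ * (|ξ| * B) := by
    rw [hPdef, hPb]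
    calc cvecNorm (Aᴴ *ᵥ v - z • b) ≤ cvecNorm (Aᴴ *ᵥ v) + cvecNorm (z • b) :=
          cvecNorm_sub_le _ _
      _ ≤ C₀ * M * (dmax * B) + 2 * Real.pi * |γ| * |ξ| * B := by
          rw [cvecNorm_smul, hznorm]; exact add_le_add hAHv le_rfl
      _ ≤ c₁ * (|ξ| * B) := by
          have h' : C₀ * dmax * (M * B) ≤ C₀ * dmax * (|ξ| * B) :=
            mul_le_mul_of_nonneg_left (mul_le_mul_of_nonneg_right hMξ hB0) (by positivity)
          rw [hc₁def]
          nlinarith [h']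
  -- Lower bound on P
  have hlow : c₂ * (|ξ| * B) ≤ P := by
    by_cases hcase : C₀ * dmax * M ≤ Real.pi * |γ| * |ξ|
    · -- reverse triangle inequality regime
      have h' : cvecNorm (z • b) - cvecNorm (Aᴴ *ᵥ v) ≤ P := by
        rw [hPdef, hPb]
        exact cvecNorm_sub_ge _ _
      rw [cvecNorm_smul, hznorm] at h'
      have hc₂le : c₂ ≤ Real.pi * |γ| := min_le_left _ _
      nlinarith [mul_le_mul_of_nonneg_right hc₂le (mul_nonneg (abs_nonneg ξ) hB0),
        mul_le_mul_of_nonneg_right hcase hB0]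
    · push_neg at hcase
      -- inner product regime
      have hsplit : (∑ i, ((surfSymb1D γ dvec N ξ) *ᵥ b) i * conj (v i)) =
          (∑ i, (Aᴴ *ᵥ v) i * conj (v i)) - z * (∑ i, b i * conj (v i)) := by
        rw [hPb, Finset.mul_sum, ← Finset.sum_sub_distrib]
        refine Finset.sum_congr rfl fun i _ => ?_
        simp only [Pi.sub_apply, Pi.smul_apply, smul_eq_mul]
        ring
      have him : (z * (∑ i, b i * conj (v i))).re = 0 := by
        have hreal : (∑ i, b i * conj (v i)) =
            ((∑ i, dvec i * Complex.normSq (b i) : ℝ) : ℂ) := by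
          push_cast
          refine Finset.sum_congr rfl fun i _ => ?_
          simp only [hvdef, _root_.map_mul, Complex.conj_ofReal]
          rw [← Complex.mul_conj]
          ring
        rw [hreal, hzdef]
        simp [Complex.mul_re, Complex.mul_im]
      have hSre : (∑ i, ((surfSymb1D γ dvec N ξ) *ᵥ b) i * conj (v i)).re =
          (∑ i, (A *ᵥ v) i * conj (v i)).re := by
        rw [hsplit, Complex.sub_re, him, sub_zero, re_conjTranspose_sum]
      have hkey : C₀⁻¹ * M * (dmin * B) ^ 2 ≤ P * (dmax * B) := by
        calc C₀⁻¹ * M * (dmin * B) ^ 2 ≤ C₀⁻¹ * M * cvecNorm v ^ 2 := by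
              apply mul_le_mul_of_nonneg_left _ (by positivity)
              apply pow_le_pow_left₀ (by positivity) hvmin
            _ ≤ (∑ i, (A *ᵥ v) i * conj (v i)).re := h2 v
            _ = (∑ i, ((surfSymb1D γ dvec N ξ) *ᵥ b) i * conj (v i)).re := hSre.symm
            _ ≤ P * cvecNorm v := by rw [hPdef]; exact re_sum_le _ _
            _ ≤ P * (dmax * B) := mul_le_mul_of_nonneg_left hvmax hP0
      -- c₂ ≤ π|γ| dmin² / (C₀² dmax²)
      have hc₂le : c₂ * (C₀ ^ 2 * dmax ^ 2) ≤ Real.pi * |γ| * dmin ^ 2 := by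
        have := min_le_right (Real.pi * |γ|)
          (Real.pi * |γ| * dmin ^ 2 / (C₀ ^ 2 * dmax ^ 2))
        rw [← hc₂def] at this
        calc c₂ * (C₀ ^ 2 * dmax ^ 2)
            ≤ Real.pi * |γ| * dmin ^ 2 / (C₀ ^ 2 * dmax ^ 2) * (C₀ ^ 2 * dmax ^ 2) :=
              mul_le_mul_of_nonneg_right this (by positivity)
          _ = Real.pi * |γ| * dmin ^ 2 := by field_simp
      have hkey2 : M * dmin ^ 2 * B ^ 2 ≤ C₀ * (P * (dmax * B)) := by
        have := mul_le_mul_of_nonneg_left hkey hC₀.le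
        calc M * dmin ^ 2 * B ^ 2 = C₀ * (C₀⁻¹ * M * (dmin * B) ^ 2) := by
              field_simp
          _ ≤ C₀ * (P * (dmax * B)) := this
      -- combine: g X dmin² B² ≤ C₀ dmax M dmin² B² ≤ C₀² dmax² P B
      have hstep1 : Real.pi * |γ| * |ξ| * dmin ^ 2 * B ^ 2 ≤
          C₀ ^ 2 * dmax ^ 2 * (P * B) := by
        have h3 : Real.pi * |γ| * |ξ| * (dmin ^ 2 * B ^ 2) ≤
            C₀ * dmax * M * (dmin ^ 2 * B ^ 2) :=
          mul_le_mul_of_nonneg_right hcase.le (by positivity)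
        have h4 : C₀ * dmax * (M * dmin ^ 2 * B ^ 2) ≤
            C₀ * dmax * (C₀ * (P * (dmax * B))) :=
          mul_le_mul_of_nonneg_left hkey2 (by positivity)
        nlinarith [h3, h4]
      rcases eq_or_lt_of_le hB0 with hB | hB
      · rw [← hB]
        simpa using hP0
      · -- divide hstep1 by C₀² dmax² and B
        have h5 : c₂ * (C₀ ^ 2 * dmax ^ 2) * (|ξ| * B ^ 2) ≤
            Real.pi * |γ| * dmin ^ 2 * (|ξ| * B ^ 2) :=
          mul_le_mul_of_nonneg_right hc₂le (by positivity)
        have h6 : c₂ * (|ξ| * B) * (C₀ ^ 2 * dmax ^ 2 * B) ≤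
            P * (C₀ ^ 2 * dmax ^ 2 * B) := by nlinarith [h5, hstep1]
        have h7 : 0 < C₀ ^ 2 * dmax ^ 2 * B := by positivity
        exact le_of_mul_le_mul_right h6 h7
  -- assemble
  constructor
  · rw [inv_mul_le_iff₀ (lt_max_of_lt_left (by positivity))]
    calc P ^ 2 ≤ (c₁ * (|ξ| * B)) ^ 2 := by
          apply pow_le_pow_left₀ hP0 hup
      _ = c₁ ^ 2 * (|ξ| ^ 2 * B ^ 2) := by ring
      _ ≤ max (c₁ ^ 2) (c₂ ^ 2)⁻¹ * (|ξ| ^ 2 * B ^ 2) := by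
          apply mul_le_mul_of_nonneg_right (le_max_left _ _) (by positivity)
  · have h8 : (c₂ * (|ξ| * B)) ^ 2 ≤ P ^ 2 :=
      pow_le_pow_left₀ (by positivity) hlow 2
    have h9 : c₂ ^ 2 * (|ξ| ^ 2 * B ^ 2) ≤ P ^ 2 := by nlinarith [h8]
    calc |ξ| ^ 2 * B ^ 2 = (c₂ ^ 2)⁻¹ * (c₂ ^ 2 * (|ξ| ^ 2 * B ^ 2)) := by
          field_simp
      _ ≤ (c₂ ^ 2)⁻¹ * P ^ 2 := mul_le_mul_of_nonneg_left h9 (by positivity)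
      _ ≤ max (c₁ ^ 2) (c₂ ^ 2)⁻¹ * P ^ 2 := by
          apply mul_le_mul_of_nonneg_right (le_max_right _ _) (by positivity)

end Main
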